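/- Let L be a positive integer and let μ : {0,...,L} × ℕ → ℝ be positive. Suppose (1) l·μ(l,m+1) − l·μ(l,m) is non-increasing in m and non-decreasing in l, and (2) (l+1)·μ(l+1,m) − l·μ(l,m) is non-increasing in l and non-decreasing in m. Call a state (l,m) with 1 ≤ m and l ≤ L−1 'type 1' if l·μ(l,m) > (l+1)·μ(l+1,m−1). Then if (l',m') is type 1 with m' ≥ 2 and l' ≤ L−1, the state (l',m'−1) is also type 1 (i.e., l'·μ(l',m'−1) > (l'+1)·μ(l'+1,m'−2)). -/
import Mathlib


/-- Assumption 2 plus type-1 propagation to the previous column: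
if `(l', m'+... )` (with `m' ≥ 2`, written as `m' = m+2`) is type 1, so is `(l', m'-1)`. -/
theorem stmt0
    (L : ℕ) (hL : 0 < L) (μ : ℕ → ℕ → ℝ)
    (hpos : ∀ l, l ≤ L → ∀ m, 0 < μ l m)
    (h1m : ∀ l, l ≤ L → ∀ m,
      (l : ℝ) * μ l (m + 2) - (l : ℝ) * μ l (m + 1) ≤
        (l : ℝ) * μ l (m + 1) - (l : ℝ) * μ l m)
    (h1l : ∀ l, l + 1 ≤ L → ∀ m,
      (l : ℝ) * μ l (m + 1) - (l : ℝ) * μ l m ≤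
        ((l : ℝ) + 1) * μ (l + 1) (m + 1) - ((l : ℝ) + 1) * μ (l + 1) m)
    (h2l : ∀ l, l + 2 ≤ L → ∀ m,
      ((l : ℝ) + 2) * μ (l + 2) m - ((l : ℝ) + 1) * μ (l + 1) m ≤
        ((l : ℝ) + 1) * μ (l + 1) m - (l : ℝ) * μ l m)
    (h2m : ∀ l, l + 1 ≤ L → ∀ m,
      ((l : ℝ) + 1) * μ (l + 1) m - (l : ℝ) * μ l m ≤
        ((l : ℝ) + 1) * μ (l + 1) (m + 1) - (l : ℝ) * μ l (m + 1))
    (l' m : ℕ) (hl' : l' + 1 ≤ L)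
    (htype1 : (l' : ℝ) * μ l' (m + 2) > ((l' : ℝ) + 1) * μ (l' + 1) (m + 1)) :
    (l' : ℝ) * μ l' (m + 1) > ((l' : ℝ) + 1) * μ (l' + 1) m := by
  have a := h1m l' (by omega) m
  have b := h1l l' hl' m
  linarith
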